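/- For every even n ≥ 2, the edge set of the complete graph on Fin n can be partitioned into n matchings, each consisting of pairwise non-crossing chords, such that exactly n/2 of these matchings have size n/2 (and thus are perfect matchings of Fin n) and exactly n/2 of them have size n/2 − 1. -/

import Mathlib

/-- `x` lies strictly inside the open clockwise arc from `a` to `b` on the convex
`n`-gon whose vertices are `Fin n` in clockwise cyclic order. -/
def InArc (n : ℕ) (a b x : Fin n) : Prop :=
  0 < (x - a).val ∧ (x - a).val < (b - a).val

/-- Two chords of the convex `n`-gon cross: their four endpoints are distinct and
interleave in the cyclic order, i.e. one endpoint of the second chord lies strictly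
inside each of the two open arcs determined by the first chord. -/
def Cross (n : ℕ) (e f : Sym2 (Fin n)) : Prop :=
  ∃ a b c d : Fin n, e = s(a, b) ∧ f = s(c, d) ∧ InArc n a b c ∧ InArc n b a d

/-- number of odd numbers below `m` -/
lemma countOdd_aux (m : ℕ) : ((Finset.range m).filter (fun k => k % 2 = 1)).card = m / 2 := by
  induction m with
  | zero => simp
  | succ m ih =>
    rw [Finset.range_add_one, Finset.filter_insert]
    by_cases h : m % 2 = 1
    · rw [if_pos h, Finset.card_insert_of_notMem (by simp), ih]
      omega
    · rw [if_neg h, ih]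
      omega

/-- For every even `n ≥ 2`, the edge set of the complete graph on `Fin n`
(the `n` points in convex position) can be partitioned into `n` matchings, each
consisting of pairwise non-crossing chords, such that exactly `n / 2` of these
matchings have size `n / 2` (and are thus perfect matchings of `Fin n`) and exactly
`n / 2` of them have size `n / 2 - 1`. -/
theorem stmt_5 (n : ℕ) (hn : 2 ≤ n) (heven : Even n) :
    ∃ M : Fin n → Finset (Sym2 (Fin n)),
      -- every element of each `M i` is a chord (two *distinct* vertices)
      (∀ i : Fin n, ∀ e ∈ M i, ¬ e.IsDiag) ∧
      -- each `M i` is a matching: its chords are pairwise vertex-disjoint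
      (∀ i : Fin n, ∀ e ∈ M i, ∀ f ∈ M i, e ≠ f → ∀ v : Fin n, v ∈ e → v ∉ f) ∧
      -- the chords of each `M i` are pairwise non-crossing
      (∀ i : Fin n, ∀ e ∈ M i, ∀ f ∈ M i, ¬ Cross n e f) ∧
      -- the matchings partition the edge set of the complete graph on `Fin n`
      (∀ a b : Fin n, a ≠ b → ∃! i : Fin n, s(a, b) ∈ M i) ∧
      -- exactly `n / 2` matchings have size `n / 2` (perfect matchings) …
      (Finset.univ.filter fun i : Fin n => (M i).card = n / 2).card = n / 2 ∧
      -- … and exactly `n / 2` matchings have size `n / 2 - 1`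
      (Finset.univ.filter fun i : Fin n => (M i).card = n / 2 - 1).card = n / 2 := by
  classical
  haveI : NeZero n := ⟨by omega⟩
  obtain ⟨m, hm⟩ := heven
  have hm1 : 1 ≤ m := by omega
  -- the sum of the two endpoints of a chord
  set add2 : Sym2 (Fin n) → Fin n :=
    Sym2.lift ⟨fun a b => a + b, fun a b => add_comm a b⟩ with hadd2
  set M : Fin n → Finset (Sym2 (Fin n)) :=
    fun i => Finset.univ.filter (fun e => ¬ e.IsDiag ∧ add2 e = i) with hM
  have memM : ∀ (i a b : Fin n), s(a, b) ∈ M i ↔ a ≠ b ∧ a + b = i := by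
    intro i a b
    simp [hM, hadd2, Sym2.lift_mk, Sym2.mk_isDiag_iff]
  -- value of negation
  have hneg : ∀ x : Fin n, x ≠ 0 → (-x).val = n - x.val := by
    intro x hx
    have hx' : 0 < x.val := by
      rcases Nat.eq_zero_or_pos x.val with h | h
      · exact absurd (Fin.ext h) hx
      · exact h
    have hlt := x.isLt
    rw [Fin.neg_def]
    simp only []
    exact Nat.mod_eq_of_lt (by omega)
  refine ⟨M, ?_, ?_, ?_, ?_, ?_⟩
  · -- non-diagonal
    intro i e he
    exact ((Finset.mem_filter.mp he).2).1
  · -- matching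
    intro i e he f hf hef v hve hvf
    obtain ⟨w, rfl⟩ := Sym2.mem_iff_exists.mp hve
    obtain ⟨w', rfl⟩ := Sym2.mem_iff_exists.mp hvf
    obtain ⟨-, h1⟩ := (memM i v w).mp he
    obtain ⟨-, h2⟩ := (memM i v w').mp hf
    exact hef (by rw [add_left_cancel (h1.trans h2.symm)])
  · -- non-crossing
    rintro i e he f hf ⟨a, b, c, d, rfl, rfl, hc, hd⟩
    simp only [InArc] at hc hd
    obtain ⟨hab, h1⟩ := (memM i a b).mp he
    obtain ⟨hcd, h2⟩ := (memM i c d).mp hf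
    have hsum : a + b = c + d := h1.trans h2.symm
    have hdb : d - b = -(c - a) := by
      have : d - b = a - c := by open Fin.CommRing in linear_combination - hsum
      rw [this, neg_sub]
    have hca0 : c - a ≠ 0 := by
      intro h
      rw [h] at hc
      exact absurd hc.1 (by simp)
    have hba0 : b - a ≠ 0 := by
      intro h
      rw [h] at hc
      simp only [Fin.val_zero] at hc
      omega
    have e1 : (d - b).val = n - (c - a).val := by rw [hdb, hneg _ hca0]
    have e2 : (a - b).val = n - (b - a).val := by
      rw [show a - b = -(b - a) by open Fin.CommRing in ring, hneg _ hba0]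
    obtain ⟨hc1, hc2⟩ := hc
    obtain ⟨hd1, hd2⟩ := hd
    have l1 := (c - a).isLt
    have l2 := (b - a).isLt
    rw [e1, e2] at hd2
    omega
  · -- partition
    intro a b hab
    refine ⟨a + b, (memM _ _ _).mpr ⟨hab, rfl⟩, fun i hi => ?_⟩
    exact (((memM i a b).mp hi).2).symm
  · -- the counting
    -- number of solutions of a + a = i
    have modlem : ∀ (i : Fin n) (k : ℕ), k < n + n →
        (k % n = i.val ↔ (k = i.val ∨ k = i.val + n)) := by
      intro i k hk
      have hi := i.isLt
      rcases lt_or_ge k n with h | h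
      · rw [Nat.mod_eq_of_lt h]; omega
      · rw [Nat.mod_eq_sub_mod h, Nat.mod_eq_of_lt (by omega)]; omega
    have solchar : ∀ (i : Fin n) (a : Fin n),
        a + a = i ↔ (a.val + a.val = i.val ∨ a.val + a.val = i.val + n) := by
      intro i a
      rw [Fin.ext_iff, Fin.val_add]
      exact modlem i _ (by have := a.isLt; omega)
    have sol : ∀ i : Fin n,
        (Finset.univ.filter fun a : Fin n => a + a = i).card
          = if i.val % 2 = 1 then 0 else 2 := by
      intro i
      by_cases hpar : i.val % 2 = 1
      · rw [if_pos hpar]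
        rw [Finset.card_eq_zero, Finset.filter_eq_empty_iff]
        intro a _
        simp only [solchar]
        omega
      · rw [if_neg hpar]
        have hi := i.isLt
        have h0 : i.val / 2 < n := by omega
        have h1 : i.val / 2 + m < n := by omega
        have key : ∀ a : Fin n,
            a + a = i ↔ (a = ⟨i.val / 2, h0⟩ ∨ a = ⟨i.val / 2 + m, h1⟩) := by
          intro a
          rw [solchar i a]
          constructor
          · rintro (h | h)
            · exact Or.inl (Fin.ext (show a.val = i.val / 2 by omega))
            · exact Or.inr (Fin.ext (show a.val = i.val / 2 + m by omega))
          · rintro (rfl | rfl)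
            · left; show i.val / 2 + i.val / 2 = i.val; omega
            · right; show i.val / 2 + m + (i.val / 2 + m) = i.val + n; omega
        have : (Finset.univ.filter fun a : Fin n => a + a = i)
            = {(⟨i.val / 2, h0⟩ : Fin n), ⟨i.val / 2 + m, h1⟩} := by
          ext a
          simp only [Finset.mem_filter, Finset.mem_univ, true_and, Finset.mem_insert,
            Finset.mem_singleton]
          exact key a
        rw [this]
        exact Finset.card_pair
          (Fin.ne_of_val_ne (show i.val / 2 ≠ i.val / 2 + m by omega))
    -- the fiberwise count: 2 * |M i| = #{a | a + a ≠ i}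
    have card_key : ∀ i : Fin n,
        2 * (M i).card = (Finset.univ.filter fun a : Fin n => ¬ a + a = i).card := by
      intro i
      have Hmem : ∀ a ∈ (Finset.univ.filter fun a : Fin n => ¬ a + a = i),
          s(a, i - a) ∈ M i := by
        intro a ha
        have ha' : ¬ a + a = i := (Finset.mem_filter.mp ha).2
        rw [memM]
        constructor
        · intro h
          apply ha'
          nth_rewrite 2 [h]
          open Fin.CommRing in ring
        · open Fin.CommRing in ring
      rw [Finset.card_eq_sum_card_fiberwise Hmem]
      have hfib : ∀ e ∈ M i,
          ((Finset.univ.filter fun a : Fin n => ¬ a + a = i).filter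
            (fun a => s(a, i - a) = e)).card = 2 := by
        intro e he
        induction e using Sym2.ind with
        | _ x y =>
          obtain ⟨hxy, hxysum⟩ := (memM i x y).mp he
          have hyx : i - x = y := by open Fin.CommRing in linear_combination -hxysum
          have hxy' : i - y = x := by open Fin.CommRing in linear_combination -hxysum
          have : ((Finset.univ.filter fun a : Fin n => ¬ a + a = i).filter
              (fun a => s(a, i - a) = s(x, y))) = {x, y} := by
            ext a
            simp only [Finset.mem_filter, Finset.mem_univ, true_and, Finset.mem_insert,
              Finset.mem_singleton, Sym2.eq_iff]
            constructor
            · rintro ⟨-, (⟨h, -⟩ | ⟨h, -⟩)⟩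
              · exact Or.inl h
              · exact Or.inr h
            · rintro (rfl | rfl)
              · refine ⟨?_, Or.inl ⟨rfl, hyx⟩⟩
                intro h
                apply hxy
                have : a = i - a := by open Fin.CommRing in linear_combination h
                rw [this, hyx]
              · refine ⟨?_, Or.inr ⟨rfl, hxy'⟩⟩
                intro h
                apply hxy
                have : a = i - a := by open Fin.CommRing in linear_combination h
                exact hxy'.symm.trans this.symm
          rw [this]
          exact Finset.card_pair hxy
      rw [Finset.sum_congr rfl hfib, Finset.sum_const, smul_eq_mul, mul_comm]
    -- hence the card of M i
    have cardM : ∀ i : Fin n, (M i).card = if i.val % 2 = 1 then n / 2 else n / 2 - 1 := by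
      intro i
      have h1 := card_key i
      have h2 := Finset.card_filter_add_card_filter_not
        (s := (Finset.univ : Finset (Fin n))) (p := fun a : Fin n => a + a = i)
      rw [sol i, Finset.card_univ, Fintype.card_fin] at h2
      by_cases hpar : i.val % 2 = 1
      · rw [if_pos hpar] at h2 ⊢
        omega
      · rw [if_neg hpar] at h2 ⊢
        omega
    -- count odd / even residues in Fin n
    have c1 : (Finset.univ.filter fun i : Fin n => i.val % 2 = 1).card = n / 2 := by
      rw [← countOdd_aux n]
      apply Finset.card_bij (fun i _ => i.val)
      · intro a ha
        simp only [Finset.mem_filter, Finset.mem_univ, true_and] at ha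
        simp [Finset.mem_filter, Finset.mem_range, a.isLt, ha]
      · intro a _ b _ h
        exact Fin.ext h
      · intro b hb
        simp only [Finset.mem_filter, Finset.mem_range] at hb
        exact ⟨⟨b, hb.1⟩, Finset.mem_filter.mpr ⟨Finset.mem_univ _, hb.2⟩, rfl⟩
    have c2 : (Finset.univ.filter fun i : Fin n => ¬ i.val % 2 = 1).card = n / 2 := by
      have h2 := Finset.card_filter_add_card_filter_not
        (s := (Finset.univ : Finset (Fin n))) (p := fun i : Fin n => i.val % 2 = 1)
      rw [c1, Finset.card_univ, Fintype.card_fin] at h2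
      omega
    constructor
    · rw [show (Finset.univ.filter fun i : Fin n => (M i).card = n / 2)
          = (Finset.univ.filter fun i : Fin n => i.val % 2 = 1) from ?_]
      · exact c1
      · ext i
        simp only [Finset.mem_filter, Finset.mem_univ, true_and, cardM i]
        by_cases hpar : i.val % 2 = 1
        · simp [hpar]
        · simp only [if_neg hpar]
          constructor
          · intro h; omega
          · intro h; exact absurd h hpar
    · rw [show (Finset.univ.filter fun i : Fin n => (M i).card = n / 2 - 1)
          = (Finset.univ.filter fun i : Fin n => ¬ i.val % 2 = 1) from ?_]
      · exact c2
      · ext i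
        simp only [Finset.mem_filter, Finset.mem_univ, true_and, cardM i]
        by_cases hpar : i.val % 2 = 1
        · simp only [if_pos hpar]
          constructor
          · intro h; omega
          · intro h; exact absurd hpar h
        · simp [hpar]
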